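/- arXiv:1604.07846 — 3 statements merged into one kernel-verified Lean document; each statement's English description precedes it below -/
import Mathlib

section
/- For α, β > -1 and n ≥ 1, the extended Jacobi polynomials satisfy ((1-t)/2) J_{n-1}^{α+1,β}(t) = α J_n^{α,β-1}(t) − (n+α) J_n^{α-1,β}(t). -/
open Finset MeasureTheory

/-- Pochhammer symbol `(a)_m` (rising factorial). -/
noncomputable def poch (a : ℝ) (m : ℕ) : ℝ := (ascPochhammer ℝ m).eval a

/-- Extended Jacobi polynomial `J_n^{α,β}(t)`.  Terms with vanishing denominator
(which are exactly the terms with index below `ι₀`) are `0` by the division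
convention, so this agrees with the paper's definition. -/
noncomputable def J (α β : ℝ) (n : ℕ) (t : ℝ) : ℝ :=
  ∑ k ∈ Finset.range (n + 1),
    poch ((k : ℝ) + α + 1) (n - k) /
      (((n - k).factorial : ℝ) * (k.factorial : ℝ) *
        poch ((n : ℝ) + α + β + (k : ℝ) + 1) (n - k)) *
      ((t - 1) / 2) ^ k

/-- Classical Jacobi polynomial `P_n^{(α,β)}(t)`. -/
noncomputable def P (α β : ℝ) (n : ℕ) (t : ℝ) : ℝ :=
  ∑ k ∈ Finset.range (n + 1),
    poch ((k : ℝ) + α + 1) (n - k) * poch ((n : ℝ) + α + β + 1) k /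
      (((n - k).factorial : ℝ) * (k.factorial : ℝ)) * ((t - 1) / 2) ^ k


lemma poch_succ (a : ℝ) (M : ℕ) : poch a (M+1) = poch a M * (a + M) := by
  simp [poch, ascPochhammer_succ_eval]

lemma poch_succ' (a : ℝ) (M : ℕ) : poch a (M+1) = a * poch (a+1) M := by
  simp [poch, ascPochhammer_succ_left, Polynomial.eval_comp]

lemma poch_shift (a : ℝ) (M : ℕ) : poch a M * (a + M) = a * poch (a+1) M := by
  rw [← poch_succ, poch_succ']

lemma zero_term (α c A B D : ℝ) (h : c * B = α * A) :
    α * (A / D) - c * (B / D) = 0 := by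
  rw [mul_div_assoc', mul_div_assoc', div_sub_div_same,
    show α * A - c * B = 0 by linear_combination -h, zero_div]

lemma term_step (α t F D A B c : ℝ) (j : ℕ)
    (hk : c * B = ((j:ℝ)+α+1) * A) :
    (1 - t)/2 * (A / (F * ((j.factorial : ℕ):ℝ) * D) * ((t-1)/2)^j)
      = α * (A / (F * (((j+1).factorial : ℕ):ℝ) * D) * ((t-1)/2)^(j+1))
        - c * (B / (F * (((j+1).factorial : ℕ):ℝ) * D) * ((t-1)/2)^(j+1)) := by
  have hj : ((j:ℝ)+1) ≠ 0 := by positivity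
  have hfac : (((j+1).factorial : ℕ):ℝ) = ((j:ℝ)+1) * ((j.factorial : ℕ):ℝ) := by
    rw [Nat.factorial_succ]; push_cast; ring
  have key : α * A - c * B = -(((j:ℝ)+1) * A) := by linear_combination -hk
  have main : α * (A / (F * (((j+1).factorial : ℕ):ℝ) * D) * ((t-1)/2)^(j+1))
        - c * (B / (F * (((j+1).factorial : ℕ):ℝ) * D) * ((t-1)/2)^(j+1))
      = ((α*A - c*B) / (F * (((j+1).factorial : ℕ):ℝ) * D)) * ((t-1)/2)^(j+1) := by
    ring
  rw [main, key, hfac,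
    show F * (((j:ℝ)+1) * ((j.factorial : ℕ):ℝ)) * D
        = ((j:ℝ)+1) * (F * ((j.factorial : ℕ):ℝ) * D) by ring,
    neg_div, mul_div_mul_left _ _ hj]
  ring

theorem stmt9 (α β : ℝ) (hα : -1 < α) (hβ : -1 < β) (n : ℕ) (hn : 1 ≤ n) (t : ℝ) :
    (1 - t) / 2 * J (α + 1) β (n - 1) t =
      α * J α (β - 1) n t - ((n : ℝ) + α) * J (α - 1) β n t := by
  obtain ⟨m, rfl⟩ : ∃ m, n = m + 1 := ⟨n - 1, (Nat.succ_pred_eq_of_pos hn).symm⟩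
  rw [J, J, J, Nat.add_sub_cancel, Finset.mul_sum, Finset.mul_sum, Finset.mul_sum,
    ← Finset.sum_sub_distrib]
  conv_rhs => rw [Finset.sum_range_succ']
  simp only [Nat.sub_zero, Nat.cast_zero, Nat.factorial_zero, Nat.cast_one, pow_zero,
    mul_one, zero_add, add_zero]
  rw [show α - 1 + 1 = α by ring,
    show ((m+1 : ℕ):ℝ) + α + (β - 1) + 1 = ((m+1 : ℕ):ℝ) + (α - 1) + β + 1 by ring]
  have hk0 : (((m+1 : ℕ):ℝ) + α) * poch α (m+1) = α * poch (α+1) (m+1) := by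
    linear_combination poch_shift α (m+1)
  rw [zero_term _ _ _ _ _ hk0, add_zero]
  apply Finset.sum_congr rfl
  intro j hj
  have hjm : j ≤ m := Nat.lt_succ_iff.mp (Finset.mem_range.mp hj)
  simp only [Nat.succ_sub_succ]
  rw [show ((j+1 : ℕ):ℝ) + α + 1 = (j:ℝ) + (α + 1) + 1 by push_cast; ring,
    show ((m+1 : ℕ):ℝ) + α + (β - 1) + ((j+1 : ℕ):ℝ) + 1
        = (m:ℝ) + (α + 1) + β + (j:ℝ) + 1 by push_cast; ring,
    show ((m+1 : ℕ):ℝ) + (α - 1) + β + ((j+1 : ℕ):ℝ) + 1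
        = (m:ℝ) + (α + 1) + β + (j:ℝ) + 1 by push_cast; ring,
    show ((j+1 : ℕ):ℝ) + (α - 1) + 1 = (j:ℝ) + α + 1 by push_cast; ring]
  have hk : (((m+1 : ℕ):ℝ) + α) * poch ((j:ℝ) + α + 1) (m - j)
      = ((j:ℝ) + α + 1) * poch ((j:ℝ) + (α + 1) + 1) (m - j) := by
    have h := poch_shift ((j:ℝ) + α + 1) (m - j)
    rw [show ((m - j : ℕ):ℝ) = (m:ℝ) - (j:ℝ) from Nat.cast_sub hjm] at h
    rw [show (j:ℝ) + (α + 1) + 1 = (j:ℝ) + α + 1 + 1 by ring]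
    push_cast
    linear_combination h
  exact term_step α t _ _ _ _ _ j hk
end

section
/- For α, β > -1 and n ≥ 1, the extended Jacobi polynomials satisfy ((1+t)/2) J_{n-1}^{α+1,β+1}(t) = n J_n^{α,β}(t) + ((n+β)/(2n+α+β)) J_{n-1}^{α+1,β}(t). -/
open Finset MeasureTheory

lemma poch_zero (a : ℝ) : poch a 0 = 1 := by simp [poch]

lemma poch_succ_left (a : ℝ) (r : ℕ) : poch a (r+1) = a * poch (a+1) r := by
  simp [poch, ascPochhammer_succ_left, Polynomial.eval_comp]

lemma poch_succ_right (a : ℝ) (r : ℕ) : poch a (r+1) = poch a r * (a + r) := by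
  simp [poch, ascPochhammer_succ_right]

lemma poch_pos (a : ℝ) (h : 0 < a) (r : ℕ) : 0 < poch a r :=
  ascPochhammer_pos r a h

lemma aux_sum (A B C : ℕ → ℝ) (x c d : ℝ) (m : ℕ)
    (h0 : A 0 = c * B 0 + d * C 0) (hm : A m = c * B (m+1))
    (hk : ∀ k, k < m → A (k+1) + A k = c * B (k+1) + d * C (k+1)) :
    (1 + x) * ∑ k ∈ Finset.range (m+1), A k * x ^ k =
      c * ∑ k ∈ Finset.range (m+2), B k * x ^ k
        + d * ∑ k ∈ Finset.range (m+1), C k * x ^ k := by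
  rw [Finset.sum_range_succ _ (m+1), Finset.sum_range_succ' (fun k => B k * x ^ k) m,
    Finset.sum_range_succ' (fun k => C k * x ^ k) m]
  have lhs : (1 + x) * ∑ k ∈ Finset.range (m+1), A k * x ^ k
      = (∑ k ∈ Finset.range m, A (k+1) * x ^ (k+1) + A 0 * x ^ 0)
        + (∑ k ∈ Finset.range m, A k * x ^ (k+1) + A m * x ^ (m+1)) := by
    rw [← Finset.sum_range_succ' (fun k => A k * x ^ k) m,
      ← Finset.sum_range_succ (fun k => A k * x ^ (k+1)) m]
    rw [add_mul, one_mul, Finset.mul_sum]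
    congr 1
    exact Finset.sum_congr rfl fun k _ => by ring
  rw [lhs]
  have main : ∑ k ∈ Finset.range m, A (k+1) * x ^ (k+1)
        + ∑ k ∈ Finset.range m, A k * x ^ (k+1)
      = c * ∑ k ∈ Finset.range m, B (k+1) * x ^ (k+1)
        + d * ∑ k ∈ Finset.range m, C (k+1) * x ^ (k+1) := by
    rw [← Finset.sum_add_distrib, Finset.mul_sum, Finset.mul_sum, ← Finset.sum_add_distrib]
    refine Finset.sum_congr rfl fun k hkm => ?_
    have := hk k (Finset.mem_range.mp hkm)
    calc A (k+1) * x ^ (k+1) + A k * x ^ (k+1) = (A (k+1) + A k) * x ^ (k+1) := by ring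
      _ = (c * B (k+1) + d * C (k+1)) * x ^ (k+1) := by rw [this]
      _ = _ := by ring
  calc ∑ k ∈ Finset.range m, A (k+1) * x ^ (k+1) + A 0 * x ^ 0
        + (∑ k ∈ Finset.range m, A k * x ^ (k+1) + A m * x ^ (m+1))
      = (∑ k ∈ Finset.range m, A (k+1) * x ^ (k+1)
          + ∑ k ∈ Finset.range m, A k * x ^ (k+1)) + A 0 * x ^ 0 + A m * x ^ (m+1) := by ring
    _ = _ := by rw [main, h0, hm]; ring


set_option maxHeartbeats 2000000 in
theorem stmt10 (α β : ℝ) (hα : -1 < α) (hβ : -1 < β) (n : ℕ) (hn : 1 ≤ n) (t : ℝ) :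
    (1 + t) / 2 * J (α + 1) (β + 1) (n - 1) t =
      (n : ℝ) * J α β n t +
        ((n : ℝ) + β) / (2 * (n : ℝ) + α + β) * J (α + 1) β (n - 1) t := by
  obtain ⟨m, rfl⟩ : ∃ m, n = m + 1 := ⟨n - 1, (Nat.succ_pred_eq_of_pos hn).symm⟩
  simp only [J, Nat.add_sub_cancel]
  rw [show (1 + t) / 2 = 1 + (t-1)/2 by ring]
  refine aux_sum
    (fun k => poch ((k : ℝ) + (α+1) + 1) (m - k) /
      (((m - k).factorial : ℝ) * (k.factorial : ℝ) *
        poch ((m : ℝ) + (α+1) + (β+1) + (k : ℝ) + 1) (m - k)))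
    (fun k => poch ((k : ℝ) + α + 1) (m + 1 - k) /
      (((m + 1 - k).factorial : ℝ) * (k.factorial : ℝ) *
        poch (((m+1 : ℕ) : ℝ) + α + β + (k : ℝ) + 1) (m + 1 - k)))
    (fun k => poch ((k : ℝ) + (α+1) + 1) (m - k) /
      (((m - k).factorial : ℝ) * (k.factorial : ℝ) *
        poch ((m : ℝ) + (α+1) + β + (k : ℝ) + 1) (m - k)))
    ((t-1)/2) (((m+1 : ℕ) : ℝ)) ((((m+1:ℕ) : ℝ) + β) / (2 * (((m+1:ℕ)) : ℝ) + α + β)) m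
    ?_ ?_ ?_
  · -- h0
    beta_reduce
    simp only [Nat.sub_zero, Nat.factorial_zero, Nat.cast_one, Nat.cast_zero, one_mul, mul_one]
    push_cast
    rw [poch_succ_left (0 + α + 1) m,
        poch_succ_left (↑m + 1 + α + β + 0 + 1) m]
    have hsr : ((↑m + (α + 1) + β + 0 + 1 : ℝ) + ↑m) ≠ 0 := by
      nlinarith [Nat.cast_nonneg (α := ℝ) m]
    have hv : poch (↑m + (α + 1) + β + 0 + 1) m
        = (↑m + (α + 1) + β + 0 + 1) * poch ((↑m + (α + 1) + β + 0 + 1) + 1) m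
          / ((↑m + (α + 1) + β + 0 + 1) + ↑m) := by
      rw [eq_div_iff hsr, ← poch_succ_right, poch_succ_left]
    rw [hv]
    rw [show (0 + (α + 1) + 1 : ℝ) = α + 2 by ring,
        show (0 + α + 1 + 1 : ℝ) = α + 2 by ring,
        show (↑m + (α + 1) + (β + 1) + 0 + 1 : ℝ) = ↑m + α + β + 3 by ring,
        show (↑m + 1 + α + β + 0 + 1 + 1 : ℝ) = ↑m + α + β + 3 by ring,
        show ((↑m + (α + 1) + β + 0 + 1 : ℝ) + 1) = ↑m + α + β + 3 by ring,
        show ((↑m + (α + 1) + β + 0 + 1 : ℝ) + ↑m) = 2*↑m + α + β + 2 by ring,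
        show (2 * (↑m + 1 : ℝ) + α + β) = 2*↑m + α + β + 2 by ring,
        show (↑m + 1 + α + β + 0 + 1 : ℝ) = ↑m + α + β + 2 by ring,
        show (↑m + (α + 1) + β + 0 + 1 : ℝ) = ↑m + α + β + 2 by ring]
    rw [Nat.factorial_succ]
    push_cast
    have hu0 : 0 < poch (α + 2) m := poch_pos _ (by linarith) m
    have hq0 : 0 < poch (↑m + α + β + 3) m :=
      poch_pos _ (by nlinarith [Nat.cast_nonneg (α := ℝ) m]) m
    have h1 : ((m:ℝ) + α + β + 2) ≠ 0 := by nlinarith [Nat.cast_nonneg (α := ℝ) m]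
    have h2 : (2*(m:ℝ) + α + β + 2) ≠ 0 := by nlinarith [Nat.cast_nonneg (α := ℝ) m]
    have hmf : ((m.factorial : ℕ) : ℝ) ≠ 0 := by positivity
    have hm1 : ((m:ℝ)+1) ≠ 0 := by positivity
    field_simp [hu0.ne', hq0.ne']
    ring
  · -- hm
    simp only [Nat.sub_zero, Nat.sub_self, Nat.add_sub_cancel_left, poch_zero]
    push_cast
    rw [Nat.factorial_succ]
    have hmf : ((m.factorial : ℕ) : ℝ) ≠ 0 := by positivity
    have hm1 : ((m:ℝ)+1) ≠ 0 := by positivity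
    push_cast
    field_simp
  · -- hk
    intro k hk
    obtain ⟨r, rfl⟩ : ∃ r, m = k + 1 + r := ⟨m - (k+1), by omega⟩
    beta_reduce
    rw [show k+1+r - (k+1) = r from by omega, show k+1+r - k = r+1 from by omega,
        show k+1+r+1 - (k+1) = r+1 from by omega]
    push_cast
    rw [poch_succ_left (↑k + (α + 1) + 1) r,
        poch_succ_left (↑k + 1 + α + 1) r,
        poch_succ_left (↑k + 1 + ↑r + (α + 1) + (β + 1) + ↑k + 1) r,
        poch_succ_left (↑k + 1 + ↑r + 1 + α + β + (↑k + 1) + 1) r]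
    have hsr : ((↑k + 1 + ↑r + (α + 1) + β + (↑k + 1) + 1 : ℝ) + ↑r) ≠ 0 := by
      push_cast; nlinarith [Nat.cast_nonneg (α := ℝ) k, Nat.cast_nonneg (α := ℝ) r]
    have hv : poch (↑k + 1 + ↑r + (α + 1) + β + (↑k + 1) + 1) r
        = (↑k + 1 + ↑r + (α + 1) + β + (↑k + 1) + 1)
          * poch ((↑k + 1 + ↑r + (α + 1) + β + (↑k + 1) + 1) + 1) r
          / ((↑k + 1 + ↑r + (α + 1) + β + (↑k + 1) + 1) + ↑r) := by
      rw [eq_div_iff hsr, ← poch_succ_right, poch_succ_left]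
    rw [hv]
    rw [show (↑k + (α + 1) + 1 + 1 : ℝ) = ↑k + α + 3 by ring,
        show (↑k + 1 + (α + 1) + 1 : ℝ) = ↑k + α + 3 by ring,
        show (↑k + 1 + α + 1 + 1 : ℝ) = ↑k + α + 3 by ring,
        show (↑k + 1 + ↑r + (α + 1) + (β + 1) + ↑k + 1 + 1 : ℝ)
          = 2*↑k + ↑r + α + β + 5 by ring,
        show (↑k + 1 + ↑r + 1 + α + β + (↑k + 1) + 1 + 1 : ℝ)
          = 2*↑k + ↑r + α + β + 5 by ring,
        show ((↑k + 1 + ↑r + (α + 1) + β + (↑k + 1) + 1 : ℝ) + 1)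
          = 2*↑k + ↑r + α + β + 5 by ring,
        show (↑k + 1 + ↑r + (α + 1) + (β + 1) + (↑k + 1) + 1 : ℝ)
          = 2*↑k + ↑r + α + β + 5 by ring,
        show ((↑k + 1 + ↑r + (α + 1) + β + (↑k + 1) + 1 : ℝ) + ↑r)
          = 2*↑k + 2*↑r + α + β + 4 by ring,
        show (2 * (↑k + 1 + ↑r + 1 : ℝ) + α + β)
          = 2*↑k + 2*↑r + α + β + 4 by ring,
        show (↑k + 1 + ↑r + (α + 1) + (β + 1) + ↑k + 1 : ℝ)
          = 2*↑k + ↑r + α + β + 4 by ring,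
        show (↑k + 1 + ↑r + 1 + α + β + (↑k + 1) + 1 : ℝ)
          = 2*↑k + ↑r + α + β + 4 by ring,
        show (↑k + 1 + ↑r + (α + 1) + β + (↑k + 1) + 1 : ℝ)
          = 2*↑k + ↑r + α + β + 4 by ring]
    rw [Nat.factorial_succ r, Nat.factorial_succ k]
    push_cast
    have hu0 : 0 < poch (↑k + α + 3) r :=
      poch_pos _ (by have := Nat.cast_nonneg (α := ℝ) k; linarith) r
    have hq0 : 0 < poch (2*↑k + ↑r + α + β + 5) r :=
      poch_pos _ (by nlinarith [Nat.cast_nonneg (α := ℝ) k, Nat.cast_nonneg (α := ℝ) r]) r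
    have hrf : (0:ℝ) < (r.factorial : ℝ) := by positivity
    have hkf : (0:ℝ) < (k.factorial : ℝ) := by positivity
    have h1 : (2*(k:ℝ) + ↑r + α + β + 4) ≠ 0 := by nlinarith [Nat.cast_nonneg (α := ℝ) k, Nat.cast_nonneg (α := ℝ) r]
    have h2 : (2*(k:ℝ) + 2*↑r + α + β + 4) ≠ 0 := by nlinarith [Nat.cast_nonneg (α := ℝ) k, Nat.cast_nonneg (α := ℝ) r]
    have hk1 : ((k:ℝ) + 1) ≠ 0 := by positivity
    have hr1 : ((r:ℝ) + 1) ≠ 0 := by positivity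
    have h1' : ((k:ℝ) * 2 + ↑r + α + β + 4) ≠ 0 := by linarith [h1]
    have h2' : (2 * ((k:ℝ) + ↑r) + α + β + 4) ≠ 0 := by intro h; exact h2 (by linarith)
    field_simp [hu0.ne', hq0.ne']
    ring
end

section
/- Let m ≥ 1 and α > −m−1. Define the inner product ⟨f,g⟩ := ∫_0^1 f^{(m)}(t) g^{(m)}(t) (1−t)^{α+m} dt + Σ_{k=0}^{m−1} λ_k f^{(k)}(0) g^{(k)}(0) with λ_k > 0 on the space of polynomials. Then for n ≥ m + max{0, ⌊−α⌋}, the polynomials Ĵ_n(t) := J_n^{α,−m}(2t−1) satisfy ∂^k Ĵ_n(0) = 0 for 0 ≤ k ≤ m−1, and ⟨Ĵ_n, Ĵ_{n'}⟩ = 0 for n ≠ n' with both n, n' ≥ m + max{0, ⌊−α⌋}. -/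
open Finset MeasureTheory

open Polynomial

set_option maxHeartbeats 1000000

lemma poch_prod (a : ℝ) (s : ℕ) : poch a s = ∏ i ∈ Finset.range s, (a + i) := by
  induction s with
  | zero => simp [poch]
  | succ s ih => rw [poch, ascPochhammer_succ_eval, ← poch, ih, Finset.prod_range_succ]

/-- finite difference lemma -/
lemma FD : ∀ (N : ℕ) (p : Polynomial ℝ), p.degree < (N : WithBot ℕ) →
    ∑ j ∈ Finset.range (N + 1), (-1 : ℝ) ^ j * (N.choose j) * p.eval (j : ℝ) = 0 := by
  intro N
  induction N with
  | zero =>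
    intro p hp
    have : p = 0 := by
      rw [← Polynomial.degree_eq_bot]
      exact Nat.WithBot.lt_zero_iff.mp (by exact_mod_cast hp)
    simp [this]
  | succ N ih =>
    intro p hp
    by_cases hp0 : p = 0
    · simp [hp0]
    set q : Polynomial ℝ := p - p.comp (X + 1) with hq
    have hXC : (X + 1 : Polynomial ℝ) = X + C 1 := by rw [map_one]
    have hndX : (X + 1 : Polynomial ℝ).natDegree = 1 := by
      compute_degree!
    have hlcX : (X + 1 : Polynomial ℝ).leadingCoeff = 1 := by
      rw [hXC]; exact (monic_X_add_C 1)
    have hlc : (p.comp (X + 1)).leadingCoeff = p.leadingCoeff := by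
      rw [leadingCoeff_comp (by rw [hndX]; norm_num), hlcX, one_pow, mul_one]
    have hcomp0 : p.comp (X + 1) ≠ 0 := by
      intro h
      apply hp0
      rw [← leadingCoeff_eq_zero, ← hlc, h, leadingCoeff_zero]
    have hdq : q.degree < p.degree := by
      apply degree_sub_lt _ hp0 hlc.symm
      rw [degree_eq_natDegree hp0, degree_eq_natDegree hcomp0, natDegree_comp, hndX, mul_one]
    have hdq' : q.degree < (N : WithBot ℕ) := by
      have hplt : p.natDegree < N + 1 := (natDegree_lt_iff_degree_lt hp0).mpr hp
      calc q.degree < p.degree := hdq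
        _ = (p.natDegree : WithBot ℕ) := degree_eq_natDegree hp0
        _ ≤ (N : WithBot ℕ) := by exact_mod_cast Nat.lt_succ_iff.mp hplt
    have hqe : ∀ j : ℕ, q.eval (j : ℝ) = p.eval (j : ℝ) - p.eval ((j : ℝ) + 1) := by
      intro j; simp [hq, eval_comp]
    have key : ∑ j ∈ Finset.range (N + 2), (-1 : ℝ) ^ j * ((N+1).choose j) * p.eval (j : ℝ)
        = ∑ j ∈ Finset.range (N + 1), (-1 : ℝ) ^ j * (N.choose j) * q.eval (j : ℝ) := by
      have h2 : ∀ i : ℕ, (-1 : ℝ) ^ (i+1) * (((N+1).choose (i+1) : ℕ) : ℝ) * p.eval (((i+1 : ℕ)) : ℝ)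
          = -((-1:ℝ)^i * (N.choose i) * p.eval ((i:ℝ)+1))
            + -((-1:ℝ)^i * (N.choose (i+1)) * p.eval ((i:ℝ)+1)) := by
        intro i
        rw [Nat.choose_succ_succ]
        push_cast
        ring
      rw [Finset.sum_range_succ' _ (N+1), Finset.sum_congr rfl (fun i _ => h2 i),
        Finset.sum_add_distrib]
      have h3 : (∑ i ∈ Finset.range (N+1), -((-1:ℝ)^i * ((N.choose (i+1) : ℕ) : ℝ) * p.eval ((i:ℝ)+1)))
            + (-1:ℝ)^0 * ((N+1).choose 0 : ℕ) * p.eval ((0:ℕ):ℝ)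
          = ∑ j ∈ Finset.range (N + 1), (-1 : ℝ) ^ j * (N.choose j) * p.eval (j : ℝ) := by
        have := Finset.sum_range_succ' (fun j => (-1 : ℝ) ^ j * (N.choose j) * p.eval (j : ℝ)) (N+1)
        rw [Finset.sum_range_succ] at this
        simp only [Nat.choose_succ_self, Nat.cast_zero, zero_mul, mul_zero, add_zero] at this
        rw [this]
        congr 1
        · apply Finset.sum_congr rfl
          intro i _
          push_cast
          ring
        · simp
      calc (∑ i ∈ Finset.range (N+1), -((-1:ℝ)^i * (N.choose i : ℕ) * p.eval ((i:ℝ)+1)))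
            + (∑ i ∈ Finset.range (N+1), -((-1:ℝ)^i * ((N.choose (i+1) : ℕ)) * p.eval ((i:ℝ)+1)))
            + (-1:ℝ)^0 * ((N+1).choose 0 : ℕ) * p.eval ((0:ℕ):ℝ)
          = (∑ i ∈ Finset.range (N+1), -((-1:ℝ)^i * (N.choose i : ℕ) * p.eval ((i:ℝ)+1)))
            + (∑ j ∈ Finset.range (N + 1), (-1 : ℝ) ^ j * (N.choose j) * p.eval (j : ℝ)) := by
            rw [add_assoc, h3]
        _ = ∑ j ∈ Finset.range (N + 1), (-1 : ℝ) ^ j * (N.choose j) * q.eval (j : ℝ) := by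
            rw [← Finset.sum_add_distrib]
            apply Finset.sum_congr rfl
            intro i _
            rw [hqe]
            ring
    rw [key, ih q hdq']

lemma Vsum (A : ℝ) (N r : ℕ) (hr1 : 1 ≤ r) (hrN : r ≤ N)
    (hpos : ∀ l : ℕ, N - r + 1 ≤ l → 0 < A + l) :
    ∑ j ∈ Finset.range (N + 1),
      poch ((j : ℝ) + A + 1) (N - j) /
        ((((N - j).factorial : ℕ) : ℝ) * ((j.factorial : ℕ) : ℝ) *
          poch ((N : ℝ) + A - (r : ℝ) + (j : ℝ) + 1) (N - j)) * (-1 : ℝ) ^ j = 0 := by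
  set p : Polynomial ℝ := ∏ i ∈ Finset.range (N - r), (X + C (A + 1 + i)) with hp
  have hpe : ∀ j : ℕ, p.eval (j : ℝ) = ∏ i ∈ Finset.range (N - r), ((j : ℝ) + (A + 1 + i)) := by
    intro j; rw [hp, eval_prod]; apply Finset.prod_congr rfl; intro i _; simp
  have hpdeg : p.degree < (N : WithBot ℕ) := by
    rw [hp, degree_prod]
    have : ∀ i ∈ Finset.range (N - r), (X + C (A + 1 + (i:ℝ))).degree = 1 := by
      intro i _; exact degree_X_add_C _
    rw [Finset.sum_congr rfl this, Finset.sum_const, Finset.card_range, nsmul_eq_mul, mul_one]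
    exact_mod_cast Nat.sub_lt_of_pos_le hr1 hrN
  set D' : ℝ := ∏ l ∈ Finset.Ico (N + 1) (2 * N - r + 1), (A + l) with hD'
  have hD'pos : 0 < D' := by
    rw [hD']; apply Finset.prod_pos; intro l hl
    exact hpos l (le_trans (by omega) (Finset.mem_Ico.mp hl).1)
  have key : ∀ j ∈ Finset.range (N + 1),
      poch ((j : ℝ) + A + 1) (N - j) /
        ((((N - j).factorial : ℕ) : ℝ) * ((j.factorial : ℕ) : ℝ) *
          poch ((N : ℝ) + A - (r : ℝ) + (j : ℝ) + 1) (N - j)) * (-1 : ℝ) ^ j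
      = ((-1 : ℝ) ^ j * (N.choose j) * p.eval (j : ℝ)) * (1 / ((N.factorial : ℝ) * D')) := by
    intro j hj
    have hjN : j ≤ N := Nat.lt_succ_iff.mp (Finset.mem_range.mp hj)
    have h1 : poch ((j : ℝ) + A + 1) (N - j) = ∏ l ∈ Finset.Ico (j + 1) (N + 1), (A + l) := by
      rw [poch_prod, Finset.prod_Ico_eq_prod_range]
      have : N + 1 - (j + 1) = N - j := by omega
      rw [this]
      apply Finset.prod_congr rfl; intro i _; push_cast; ring
    have h2 : poch ((N : ℝ) + A - (r : ℝ) + (j : ℝ) + 1) (N - j)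
        = ∏ l ∈ Finset.Ico (N - r + j + 1) (2 * N - r + 1), (A + l) := by
      rw [poch_prod, Finset.prod_Ico_eq_prod_range]
      have : 2 * N - r + 1 - (N - r + j + 1) = N - j := by omega
      rw [this]
      apply Finset.prod_congr rfl; intro i _
      have : ((N - r + j + 1 + i : ℕ) : ℝ) = (N : ℝ) - r + j + 1 + i := by
        push_cast [Nat.cast_sub hrN]; ring
      rw [this]; ring
    set Num : ℝ := ∏ l ∈ Finset.Ico (j + 1) (N + 1), (A + l) with hNum
    set Den : ℝ := ∏ l ∈ Finset.Ico (N - r + j + 1) (2 * N - r + 1), (A + l) with hDen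
    have hDenpos : 0 < Den := by
      rw [hDen]; apply Finset.prod_pos; intro l hl
      exact hpos l (le_trans (by omega) (Finset.mem_Ico.mp hl).1)
    have hNum' : ∏ l ∈ Finset.Ico (j + 1) (N - r + j + 1), (A + l) = p.eval (j : ℝ) := by
      rw [hpe, Finset.prod_Ico_eq_prod_range]
      have : N - r + j + 1 - (j + 1) = N - r := by omega
      rw [this]
      apply Finset.prod_congr rfl; intro i _; push_cast; ring
    have h3 : Num * D' = p.eval (j : ℝ) * Den := by
      rw [hNum, hD', Finset.prod_Ico_consecutive _ (by omega) (by omega), hDen, ← hNum',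
        Finset.prod_Ico_consecutive _ (by omega) (by omega)]
    have hfact : ((N.factorial : ℕ) : ℝ)
        = (N.choose j) * ((j.factorial : ℕ) : ℝ) * (((N - j).factorial : ℕ) : ℝ) := by
      exact_mod_cast congrArg (Nat.cast (R := ℝ))
        (Nat.choose_mul_factorial_mul_factorial hjN).symm
    rw [h1, h2]
    rw [div_mul_eq_mul_div, mul_comm (Num), mul_one_div, div_eq_div_iff
      (by positivity) (by positivity)]
    linear_combination ((-1 : ℝ) ^ j * ((N.factorial : ℕ) : ℝ)) * h3
      + ((-1 : ℝ) ^ j * p.eval (j : ℝ) * Den) * hfact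
  rw [Finset.sum_congr rfl key, ← Finset.sum_mul, FD N p hpdeg, zero_mul]

lemma Msum (γ : ℝ) (hγ : -1 < γ) (N k : ℕ) (hk : k < N) :
    ∑ j ∈ Finset.range (N + 1),
      poch ((j : ℝ) + γ + 1) (N - j) /
        ((((N - j).factorial : ℕ) : ℝ) * ((j.factorial : ℕ) : ℝ) *
          poch ((N : ℝ) + γ + (j : ℝ) + 1) (N - j)) * (-1 : ℝ) ^ j / (γ + k + j + 1) = 0 := by
  have hpos : ∀ l : ℕ, 1 ≤ l → 0 < γ + l := by
    intro l hl
    have : (1 : ℝ) ≤ l := by exact_mod_cast hl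
    linarith
  set p : Polynomial ℝ := ∏ i ∈ (Finset.range N).erase k, (X + C (γ + 1 + i)) with hp
  have hpe : ∀ j : ℕ, p.eval (j : ℝ)
      = ∏ i ∈ (Finset.range N).erase k, ((j : ℝ) + (γ + 1 + i)) := by
    intro j; rw [hp, eval_prod]; apply Finset.prod_congr rfl; intro i _; simp
  have hpdeg : p.degree < (N : WithBot ℕ) := by
    rw [hp, degree_prod]
    have : ∀ i ∈ (Finset.range N).erase k, (X + C (γ + 1 + (i:ℝ))).degree = 1 := by
      intro i _; exact degree_X_add_C _
    rw [Finset.sum_congr rfl this, Finset.sum_const,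
      Finset.card_erase_of_mem (Finset.mem_range.mpr hk), Finset.card_range,
      nsmul_eq_mul, mul_one]
    exact_mod_cast Nat.sub_lt (by omega) one_pos
  set D' : ℝ := ∏ l ∈ Finset.Ico (N + 1) (2 * N + 1), (γ + l) with hD'
  have hD'pos : 0 < D' := by
    rw [hD']; apply Finset.prod_pos; intro l hl
    exact hpos l (le_trans (by omega) (Finset.mem_Ico.mp hl).1)
  have key : ∀ j ∈ Finset.range (N + 1),
      poch ((j : ℝ) + γ + 1) (N - j) /
        ((((N - j).factorial : ℕ) : ℝ) * ((j.factorial : ℕ) : ℝ) *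
          poch ((N : ℝ) + γ + (j : ℝ) + 1) (N - j)) * (-1 : ℝ) ^ j / (γ + k + j + 1)
      = ((-1 : ℝ) ^ j * (N.choose j) * p.eval (j : ℝ)) * (1 / ((N.factorial : ℝ) * D')) := by
    intro j hj
    have hjN : j ≤ N := Nat.lt_succ_iff.mp (Finset.mem_range.mp hj)
    have h1 : poch ((j : ℝ) + γ + 1) (N - j) = ∏ l ∈ Finset.Ico (j + 1) (N + 1), (γ + l) := by
      rw [poch_prod, Finset.prod_Ico_eq_prod_range]
      have : N + 1 - (j + 1) = N - j := by omega
      rw [this]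
      apply Finset.prod_congr rfl; intro i _; push_cast; ring
    have h2 : poch ((N : ℝ) + γ + (j : ℝ) + 1) (N - j)
        = ∏ l ∈ Finset.Ico (N + j + 1) (2 * N + 1), (γ + l) := by
      rw [poch_prod, Finset.prod_Ico_eq_prod_range]
      have : 2 * N + 1 - (N + j + 1) = N - j := by omega
      rw [this]
      apply Finset.prod_congr rfl; intro i _; push_cast; ring
    set Num : ℝ := ∏ l ∈ Finset.Ico (j + 1) (N + 1), (γ + l) with hNum
    set Den : ℝ := ∏ l ∈ Finset.Ico (N + j + 1) (2 * N + 1), (γ + l) with hDen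
    have hDenpos : 0 < Den := by
      rw [hDen]; apply Finset.prod_pos; intro l hl
      exact hpos l (le_trans (by omega) (Finset.mem_Ico.mp hl).1)
    have hfull : ∏ l ∈ Finset.Ico (j + 1) (N + j + 1), (γ + l)
        = ∏ i ∈ Finset.range N, (γ + (j : ℝ) + 1 + i) := by
      rw [Finset.prod_Ico_eq_prod_range]
      have : N + j + 1 - (j + 1) = N := by omega
      rw [this]
      apply Finset.prod_congr rfl; intro i _; push_cast; ring
    have hsplit : ∏ i ∈ Finset.range N, (γ + (j : ℝ) + 1 + i)
        = (γ + (j : ℝ) + 1 + k) * p.eval (j : ℝ) := by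
      rw [hpe, ← Finset.mul_prod_erase _ _ (Finset.mem_range.mpr hk)]
      congr 1
      apply Finset.prod_congr rfl; intro i _; push_cast; ring
    have h4 : Num * D' = (γ + (k : ℝ) + (j : ℝ) + 1) * p.eval (j : ℝ) * Den := by
      have h3 : Num * D' = (∏ l ∈ Finset.Ico (j + 1) (N + j + 1), (γ + l)) * Den := by
        rw [hNum, hD', Finset.prod_Ico_consecutive _ (by omega) (by omega), hDen,
          Finset.prod_Ico_consecutive _ (by omega) (by omega)]
      rw [h3, hfull, hsplit]; ring
    have hfact : ((N.factorial : ℕ) : ℝ)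
        = (N.choose j) * ((j.factorial : ℕ) : ℝ) * (((N - j).factorial : ℕ) : ℝ) := by
      exact_mod_cast congrArg (Nat.cast (R := ℝ))
        (Nat.choose_mul_factorial_mul_factorial hjN).symm
    have hγkj : (0 : ℝ) < γ + k + j + 1 := by
      have : (0:ℝ) ≤ (k:ℝ) + j := by positivity
      linarith
    rw [h1, h2]
    rw [div_mul_eq_mul_div, div_div, mul_comm (Num), mul_one_div, div_eq_div_iff
      (by positivity) (by positivity)]
    linear_combination ((-1 : ℝ) ^ j * ((N.factorial : ℕ) : ℝ)) * h4
      + ((-1 : ℝ) ^ j * p.eval (j : ℝ) * Den * (γ + (k : ℝ) + (j : ℝ) + 1)) * hfact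
  rw [Finset.sum_congr rfl key, ← Finset.sum_mul, FD N p hpdeg, zero_mul]

/-- coefficient of J -/
noncomputable def Jc (α β : ℝ) (n k : ℕ) : ℝ :=
  poch ((k : ℝ) + α + 1) (n - k) /
      (((n - k).factorial : ℝ) * (k.factorial : ℝ) *
        poch ((n : ℝ) + α + β + (k : ℝ) + 1) (n - k))

lemma J_comp_eq (α β : ℝ) (n : ℕ) :
    (fun t : ℝ => J α β n (2 * t - 1)) = fun t => ∑ k ∈ Finset.range (n + 1),
      Jc α β n k * (t - 1) ^ k := by
  funext t
  unfold J Jc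
  apply Finset.sum_congr rfl
  intro k _
  congr 1
  ring_nf

lemma Jc_shift (α β : ℝ) (n j : ℕ) :
    ((j : ℝ) + 1) * Jc α β (n + 1) (j + 1) = Jc (α + 1) (β + 1) n j := by
  unfold Jc
  rw [Nat.succ_sub_succ]
  have h1 : poch ((((j+1) : ℕ) : ℝ) + α + 1) (n - j) = poch ((j : ℝ) + (α + 1) + 1) (n - j) := by
    congr 1; push_cast; ring
  have h2 : poch ((((n+1) : ℕ) : ℝ) + α + β + (((j+1) : ℕ) : ℝ) + 1) (n - j)
      = poch ((n : ℝ) + (α + 1) + (β + 1) + (j : ℝ) + 1) (n - j) := by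
    congr 1; push_cast; ring
  rw [h1, h2, Nat.factorial_succ]
  push_cast
  rw [show (((n - j).factorial : ℝ) * (((j : ℝ) + 1) * (j.factorial : ℝ)) *
      poch ((n : ℝ) + (α + 1) + (β + 1) + (j : ℝ) + 1) (n - j))
      = ((j : ℝ) + 1) * (((n - j).factorial : ℝ) * (j.factorial : ℝ) *
        poch ((n : ℝ) + (α + 1) + (β + 1) + (j : ℝ) + 1) (n - j)) from by ring]
  rw [← mul_div_assoc]
  rw [mul_div_mul_left _ _ (by positivity : (j : ℝ) + 1 ≠ 0)]

lemma hasDerivAt_Jcomp (α β : ℝ) (n : ℕ) (t : ℝ) :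
    HasDerivAt (fun t : ℝ => J α β (n + 1) (2 * t - 1)) (J (α + 1) (β + 1) n (2 * t - 1)) t := by
  rw [J_comp_eq]
  have h : HasDerivAt (fun t : ℝ => ∑ k ∈ Finset.range (n + 2), Jc α β (n + 1) k * (t - 1) ^ k)
      (∑ k ∈ Finset.range (n + 2), Jc α β (n + 1) k * (k * (t - 1) ^ (k - 1))) t := by
    apply HasDerivAt.fun_sum
    intro k _
    have h1 : HasDerivAt (fun t : ℝ => (t - 1) ^ k) ((k : ℝ) * (t - 1) ^ (k - 1)) t := by
      have := ((hasDerivAt_id t).sub_const 1).fun_pow k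
      simpa using this
    simpa using h1.const_mul (Jc α β (n + 1) k)
  convert h using 1
  rw [Finset.sum_range_succ' _ (n + 1)]
  simp only [Nat.cast_zero, zero_mul, mul_zero, add_zero, pow_zero, Nat.cast_ofNat]
  rw [congrFun (J_comp_eq (α + 1) (β + 1) n) t]
  apply Finset.sum_congr rfl
  intro j _
  rw [← Jc_shift α β n j]
  push_cast
  ring
lemma iteratedDeriv_Jcomp (k : ℕ) : ∀ (n : ℕ) (α β : ℝ), k ≤ n →
    iteratedDeriv k (fun t : ℝ => J α β n (2 * t - 1))
      = fun t => J (α + k) (β + k) (n - k) (2 * t - 1) := by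
  induction k with
  | zero => intro n α β _; simp [iteratedDeriv_zero]
  | succ k ih =>
    intro n α β hk
    obtain ⟨n', rfl⟩ : ∃ n', n = n' + 1 := ⟨n - 1, by omega⟩
    rw [iteratedDeriv_succ']
    have hd : deriv (fun t : ℝ => J α β (n' + 1) (2 * t - 1))
        = fun t => J (α + 1) (β + 1) n' (2 * t - 1) := by
      funext t; exact (hasDerivAt_Jcomp α β n' t).deriv
    rw [hd, ih n' (α + 1) (β + 1) (by omega)]
    have h1 : α + 1 + (k : ℝ) = α + ((k : ℕ) + 1 : ℕ) := by push_cast; ring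
    have h2 : β + 1 + (k : ℝ) = β + ((k : ℕ) + 1 : ℕ) := by push_cast; ring
    rw [h1, h2, Nat.succ_sub_succ]

lemma pow_mul_rpow {s : ℝ} (hs : 0 ≤ s) (c : ℕ) {γ : ℝ} (hγ : -1 < γ) :
    s ^ c * s ^ γ = s ^ (γ + c) := by
  rcases eq_or_lt_of_le hs with h0 | h0
  · rcases Nat.eq_zero_or_pos c with hc | hc
    · subst hc; simp
    · have hne : γ + (c : ℝ) ≠ 0 := by
        have : (1:ℝ) ≤ (c:ℝ) := by exact_mod_cast hc
        intro h; linarith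
      rw [← h0, zero_pow (by omega), zero_mul, Real.zero_rpow hne]
  · rw [← Real.rpow_natCast s c, ← Real.rpow_add h0, add_comm]

lemma int_rpow01 (c p : ℝ) (hp : -1 < p) :
    ∫ s in (0:ℝ)..1, c * s ^ p = c * (1 / (p + 1)) := by
  rw [intervalIntegral.integral_const_mul, integral_rpow (Or.inl hp), Real.one_rpow,
    Real.zero_rpow (by linarith), sub_zero]

lemma ortho (γ : ℝ) (hγ : -1 < γ) (N N' : ℕ) (hNN : N' < N) :
    ∫ t in (0:ℝ)..1, J γ 0 N (2 * t - 1) * J γ 0 N' (2 * t - 1) * (1 - t) ^ γ = 0 := by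
  have hsub := intervalIntegral.integral_comp_sub_left (a := (0:ℝ)) (b := 1)
    (fun t : ℝ => J γ 0 N (2 * t - 1) * J γ 0 N' (2 * t - 1) * (1 - t) ^ γ) 1
  rw [show (1:ℝ) - 1 = 0 from by norm_num, show (1:ℝ) - 0 = 1 from by norm_num] at hsub
  rw [← hsub]
  have hEq : Set.EqOn
      (fun s : ℝ => (fun t : ℝ => J γ 0 N (2 * t - 1) * J γ 0 N' (2 * t - 1) * (1 - t) ^ γ) (1 - s))
      (fun s : ℝ => ∑ q ∈ Finset.range (N + 1) ×ˢ Finset.range (N' + 1),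
        Jc γ 0 N q.1 * (-1 : ℝ) ^ q.1 * (Jc γ 0 N' q.2 * (-1 : ℝ) ^ q.2)
          * s ^ (γ + ((q.1 + q.2 : ℕ) : ℝ)))
      (Set.uIcc 0 1) := by
    intro s hs
    rw [Set.uIcc_of_le (by norm_num : (0:ℝ) ≤ 1)] at hs
    obtain ⟨hs0, hs1⟩ := hs
    simp only []
    rw [Finset.sum_product]
    have h1 : J γ 0 N (2 * (1 - s) - 1) = ∑ j ∈ Finset.range (N + 1),
        Jc γ 0 N j * ((1 - s) - 1) ^ j := congrFun (J_comp_eq γ 0 N) (1 - s)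
    have h2 : J γ 0 N' (2 * (1 - s) - 1) = ∑ k ∈ Finset.range (N' + 1),
        Jc γ 0 N' k * ((1 - s) - 1) ^ k := congrFun (J_comp_eq γ 0 N') (1 - s)
    rw [h1, h2, show (1:ℝ) - (1 - s) = s from by ring, Finset.sum_mul_sum, Finset.sum_mul]
    apply Finset.sum_congr rfl
    intro j _
    rw [Finset.sum_mul]
    apply Finset.sum_congr rfl
    intro k _
    dsimp only
    rw [← pow_mul_rpow hs0 (j + k) hγ, show (1:ℝ) - s - 1 = -s from by ring,
      neg_pow, neg_pow, pow_add]
    ring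
  rw [intervalIntegral.integral_congr hEq]
  have hint : ∀ q : ℕ × ℕ, IntervalIntegrable
      (fun s : ℝ => Jc γ 0 N q.1 * (-1 : ℝ) ^ q.1 * (Jc γ 0 N' q.2 * (-1 : ℝ) ^ q.2)
        * s ^ (γ + ((q.1 + q.2 : ℕ) : ℝ))) volume 0 1 := by
    intro q
    apply IntervalIntegrable.const_mul
    apply intervalIntegral.intervalIntegrable_rpow'
    have : (0:ℝ) ≤ ((q.1 + q.2 : ℕ) : ℝ) := Nat.cast_nonneg _
    linarith
  rw [intervalIntegral.integral_finset_sum (fun q _ => hint q)]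
  rw [Finset.sum_congr rfl (fun q _ => int_rpow01 _ _
    (by have : (0:ℝ) ≤ ((q.1 + q.2 : ℕ) : ℝ) := Nat.cast_nonneg _; linarith))]
  rw [Finset.sum_product]
  rw [Finset.sum_comm]
  apply Finset.sum_eq_zero
  intro k hk
  have hkN : k < N := lt_of_le_of_lt (Nat.lt_succ_iff.mp (Finset.mem_range.mp hk)) hNN
  have hfac : ∑ j ∈ Finset.range (N + 1),
      Jc γ 0 N j * (-1 : ℝ) ^ j * (Jc γ 0 N' k * (-1 : ℝ) ^ k) * (1 / (γ + ((j + k : ℕ) : ℝ) + 1))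
      = (Jc γ 0 N' k * (-1 : ℝ) ^ k) * ∑ j ∈ Finset.range (N + 1),
        poch ((j : ℝ) + γ + 1) (N - j) /
          ((((N - j).factorial : ℕ) : ℝ) * ((j.factorial : ℕ) : ℝ) *
            poch ((N : ℝ) + γ + (j : ℝ) + 1) (N - j)) * (-1 : ℝ) ^ j / (γ + k + j + 1) := by
    rw [Finset.mul_sum]
    apply Finset.sum_congr rfl
    intro j _
    unfold Jc
    rw [show (N : ℝ) + γ + 0 + (j : ℝ) + 1 = (N : ℝ) + γ + (j : ℝ) + 1 from by ring]
    push_cast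
    ring
  rw [hfac, Msum γ hγ N k hkN, mul_zero]

lemma ortho' (γ : ℝ) (hγ : -1 < γ) (N N' : ℕ) (h : N ≠ N') :
    ∫ t in (0:ℝ)..1, J γ 0 N (2 * t - 1) * J γ 0 N' (2 * t - 1) * (1 - t) ^ γ = 0 := by
  rcases h.lt_or_gt with hlt | hlt
  · calc ∫ t in (0:ℝ)..1, J γ 0 N (2 * t - 1) * J γ 0 N' (2 * t - 1) * (1 - t) ^ γ
        = ∫ t in (0:ℝ)..1, J γ 0 N' (2 * t - 1) * J γ 0 N (2 * t - 1) * (1 - t) ^ γ :=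
          intervalIntegral.integral_congr (fun s _ => by ring)
      _ = 0 := ortho γ hγ N' N hlt
  · exact ortho γ hγ N N' hlt

lemma part1 (m : ℕ) (hm : 1 ≤ m) (α : ℝ) (n : ℕ) (hn : (m : ℤ) + max 0 ⌊-α⌋ ≤ (n : ℤ))
    (k : ℕ) (hk : k < m) :
    iteratedDeriv k (fun t => J α (-(m : ℝ)) n (2 * t - 1)) 0 = 0 := by
  have hmn : m ≤ n := by
    have h0 : (0:ℤ) ≤ max 0 ⌊-α⌋ := le_max_left _ _
    exact_mod_cast le_trans (by omega : (m:ℤ) ≤ (m:ℤ) + max 0 ⌊-α⌋) hn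
  have hkn : k ≤ n := le_trans hk.le hmn
  rw [iteratedDeriv_Jcomp k n α (-(m:ℝ)) hkn]
  show J (α + k) (-(m:ℝ) + k) (n - k) (2 * 0 - 1) = 0
  have h := congrFun (J_comp_eq (α + k) (-(m:ℝ) + k) (n - k)) 0
  rw [h]
  set N := n - k with hN
  set r := m - k with hr
  have hpos : ∀ l : ℕ, N - r + 1 ≤ l → 0 < (α + (k:ℝ)) + l := by
    intro l hl
    have h1 : ⌊-α⌋ ≤ (n:ℤ) - m := by
      have := le_max_right (0:ℤ) ⌊-α⌋; omega
    have hfl : ((⌊-α⌋ : ℤ) : ℝ) ≤ (n:ℝ) - m := by exact_mod_cast h1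
    have h2 : -α - 1 < ((⌊-α⌋ : ℤ) : ℝ) := Int.sub_one_lt_floor (-α)
    have hl' : ((n - m : ℕ) : ℝ) + 1 ≤ (l:ℝ) := by
      exact_mod_cast (show n - m + 1 ≤ l by omega)
    have hcast : ((n - m : ℕ) : ℝ) = (n:ℝ) - m := by
      rw [Nat.cast_sub hmn]
    have hk0 : (0:ℝ) ≤ (k:ℝ) := Nat.cast_nonneg _
    linarith
  have key : ∀ j ∈ Finset.range (N + 1),
      Jc (α + k) (-(m:ℝ) + k) N j * ((0:ℝ) - 1) ^ j
      = poch ((j : ℝ) + (α + (k:ℝ)) + 1) (N - j) /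
          ((((N - j).factorial : ℕ) : ℝ) * ((j.factorial : ℕ) : ℝ) *
            poch ((N : ℝ) + (α + (k:ℝ)) - (r : ℝ) + (j : ℝ) + 1) (N - j)) * (-1 : ℝ) ^ j := by
    intro j _
    unfold Jc
    rw [show ((0:ℝ) - 1) = -1 from by norm_num]
    have hb : poch ((N : ℝ) + (α + (k:ℝ)) + (-(m:ℝ) + k) + (j:ℝ) + 1) (N - j)
        = poch ((N : ℝ) + (α + (k:ℝ)) - (r : ℝ) + (j : ℝ) + 1) (N - j) := by
      congr 1
      rw [hr, Nat.cast_sub hk.le]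
      ring
    rw [hb]
  rw [Finset.sum_congr rfl key]
  exact Vsum (α + (k:ℝ)) N r (by omega) (by omega) hpos

theorem stmt18 (m : ℕ) (hm : 1 ≤ m) (α : ℝ) (hα : -(m : ℝ) - 1 < α)
    (lam : ℕ → ℝ) (hlam : ∀ k < m, 0 < lam k)
    (n n' : ℕ) (hn : (m : ℤ) + max 0 ⌊-α⌋ ≤ (n : ℤ))
    (hn' : (m : ℤ) + max 0 ⌊-α⌋ ≤ (n' : ℤ)) :
    (∀ k < m, iteratedDeriv k (fun t => J α (-(m : ℝ)) n (2 * t - 1)) 0 = 0) ∧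
    (n ≠ n' →
      (∫ t in (0:ℝ)..1,
          iteratedDeriv m (fun s => J α (-(m : ℝ)) n (2 * s - 1)) t *
            iteratedDeriv m (fun s => J α (-(m : ℝ)) n' (2 * s - 1)) t *
            (1 - t) ^ (α + (m : ℝ)))
        + ∑ k ∈ Finset.range m,
            lam k * iteratedDeriv k (fun s => J α (-(m : ℝ)) n (2 * s - 1)) 0 *
              iteratedDeriv k (fun s => J α (-(m : ℝ)) n' (2 * s - 1)) 0 = 0) := by
  have hmn : m ≤ n := by
    have h0 : (0:ℤ) ≤ max 0 ⌊-α⌋ := le_max_left _ _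
    exact_mod_cast le_trans (by omega : (m:ℤ) ≤ (m:ℤ) + max 0 ⌊-α⌋) hn
  have hmn' : m ≤ n' := by
    have h0 : (0:ℤ) ≤ max 0 ⌊-α⌋ := le_max_left _ _
    exact_mod_cast le_trans (by omega : (m:ℤ) ≤ (m:ℤ) + max 0 ⌊-α⌋) hn'
  constructor
  · intro k hk
    exact part1 m hm α n hn k hk
  · intro hne
    have hsum0 : ∑ k ∈ Finset.range m,
        lam k * iteratedDeriv k (fun s => J α (-(m : ℝ)) n (2 * s - 1)) 0 *
          iteratedDeriv k (fun s => J α (-(m : ℝ)) n' (2 * s - 1)) 0 = 0 := by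
      apply Finset.sum_eq_zero
      intro k hk
      rw [part1 m hm α n hn k (Finset.mem_range.mp hk), mul_zero, zero_mul]
    rw [hsum0, add_zero]
    have hγ : -1 < α + (m:ℝ) := by linarith
    rw [iteratedDeriv_Jcomp m n α (-(m:ℝ)) hmn, iteratedDeriv_Jcomp m n' α (-(m:ℝ)) hmn']
    simp only [neg_add_cancel]
    exact ortho' (α + (m:ℝ)) hγ (n - m) (n' - m) (fun h => hne (by omega))
end
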